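/- If Y = X (noiseless channel), then for α ∈ (1/2,1)∪(1,∞) the Lapidoth–Pfister mutual information equals the Rényi entropy of order α/(2α−1): I_α^LP(X;X) = H_{α/(2α−1)}(X). -/

import Mathlib

open BigOperators

/-- `p` is a probability distribution on the finite set `X`. -/
def IsDist {X : Type*} [Fintype X] (p : X → ℝ) : Prop :=
  (∀ x, 0 ≤ p x) ∧ ∑ x, p x = 1

/-- The Rényi entropy of order `a` of a distribution `p`. -/
noncomputable def renyi {X : Type*} [Fintype X] (p : X → ℝ) (a : ℝ) : ℝ :=
  (1 / (1 - a)) * Real.log (∑ x, p x ^ a)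

/-- Three-factor Hölder inequality (normalized form) for finite sums. -/
lemma holder3 {X : Type*} [Fintype X] {f g h : X → ℝ}
    (hf : ∀ x, 0 ≤ f x) (hg : ∀ x, 0 ≤ g x) (hh : ∀ x, 0 ≤ h x)
    {r s t : ℝ} (hr : 0 ≤ r) (hs : 0 ≤ s) (ht : 0 ≤ t) (hrst : r + s + t = 1)
    (hF : 0 < ∑ x, f x) (hG : ∑ x, g x = 1) (hH : ∑ x, h x = 1) :
    ∑ x, f x ^ r * g x ^ s * h x ^ t ≤ (∑ x, f x) ^ r := by
  set F := ∑ x, f x with hFdef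
  have key : ∑ x, (f x / F) ^ r * g x ^ s * h x ^ t ≤ 1 := by
    calc ∑ x, (f x / F) ^ r * g x ^ s * h x ^ t
        ≤ ∑ x, (r * (f x / F) + s * g x + t * h x) :=
          Finset.sum_le_sum fun x _ => Real.geom_mean_le_arith_mean3_weighted hr hs ht
            (div_nonneg (hf x) hF.le) (hg x) (hh x) hrst
      _ = 1 := by
          rw [Finset.sum_add_distrib, Finset.sum_add_distrib, ← Finset.mul_sum,
            ← Finset.mul_sum, ← Finset.mul_sum, ← Finset.sum_div, ← hFdef,
            div_self hF.ne', hG, hH]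
          linarith
  have hFr : (0:ℝ) < F ^ r := Real.rpow_pos_of_pos hF r
  calc ∑ x, f x ^ r * g x ^ s * h x ^ t
      = (∑ x, (f x / F) ^ r * g x ^ s * h x ^ t) * F ^ r := by
        rw [Finset.sum_mul]
        refine Finset.sum_congr rfl fun x _ => ?_
        rw [Real.div_rpow (hf x) hF.le]
        field_simp
    _ ≤ 1 * F ^ r := mul_le_mul_of_nonneg_right key hFr.le
    _ = F ^ r := one_mul _

/-- For the noiseless channel (`Y = X`, joint distribution supported on the diagonal)
and `α ∈ (1/2,1)∪(1,∞)`, the Lapidoth–Pfister MI, i.e. the minimum over product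
distributions `q_X q_Y` of `D_α(p_{X,Y} ‖ q_X q_Y)`, equals `H_{α/(2α-1)}(X)`. -/
theorem lapidothPfisterMI_noiseless {X : Type*} [Fintype X] [DecidableEq X]
    (α : ℝ) (hα0 : 1 / 2 < α) (hα1 : α ≠ 1)
    (p : X → ℝ) (hp : IsDist p) (hps : ∀ x, 0 < p x) :
    IsLeast {v : ℝ | ∃ qX qY : X → ℝ, IsDist qX ∧ IsDist qY ∧
        (∀ x, 0 < qX x) ∧ (∀ y, 0 < qY y) ∧
        v = (1 / (α - 1)) * Real.log (∑ x, ∑ y,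
              (p x * (if y = x then (1 : ℝ) else 0)) ^ α * (qX x * qY y) ^ (1 - α))}
      (renyi p (α / (2 * α - 1))) := by
  have h2α : (0:ℝ) < 2 * α - 1 := by linarith
  have hαpos : (0:ℝ) < α := by linarith
  have hα1' : α - 1 ≠ 0 := sub_ne_zero.mpr hα1
  set β := α / (2 * α - 1) with hβ
  set S := ∑ x, p x ^ β with hS
  have hne : (Finset.univ : Finset X).Nonempty := by
    rcases (Finset.univ : Finset X).eq_empty_or_nonempty with hE | hne
    · exfalso
      have h1 := hp.2
      rw [hE, Finset.sum_empty] at h1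
      norm_num at h1
    · exact hne
  have hSpos : 0 < S := by
    rw [hS]
    exact Finset.sum_pos (fun x _ => Real.rpow_pos_of_pos (hps x) β) hne
  -- collapse the double sum
  have hsum : ∀ qX qY : X → ℝ,
      (∑ x, ∑ y, (p x * (if y = x then (1:ℝ) else 0)) ^ α * (qX x * qY y) ^ (1 - α))
      = ∑ x, p x ^ α * (qX x * qY x) ^ (1 - α) := by
    intro qX qY
    refine Finset.sum_congr rfl fun x _ => ?_
    rw [Finset.sum_eq_single x]
    · simp
    · intro b _ hb
      rw [if_neg hb, mul_zero, Real.zero_rpow hαpos.ne', zero_mul]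
    · intro habs; exact absurd (Finset.mem_univ x) habs
  have hren : renyi p β = ((2*α-1)/(α-1)) * Real.log S := by
    have hβeq : 1 - β = (α - 1)/(2*α - 1) := by
      rw [hβ, eq_div_iff h2α.ne', sub_mul, div_mul_cancel₀ _ h2α.ne']; ring
    unfold renyi
    rw [hβeq, one_div_div, ← hS]
  constructor
  · -- membership: take qX = qY = p^β / S
    set q : X → ℝ := fun x => p x ^ β / S with hq
    have hqpos : ∀ x, 0 < q x := fun x =>
      div_pos (Real.rpow_pos_of_pos (hps x) β) hSpos
    have hqdist : IsDist q := by
      refine ⟨fun x => (hqpos x).le, ?_⟩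
      rw [hq]
      simp only
      rw [← Finset.sum_div, ← hS, div_self hSpos.ne']
    refine ⟨q, q, hqdist, hqdist, hqpos, hqpos, ?_⟩
    rw [hsum q q]
    have hterm : ∀ x : X, p x ^ α * (q x * q x) ^ (1-α) = p x ^ β * S ^ (2*(α-1)) := by
      intro x
      have hpx := hps x
      have h2 : q x * q x = p x ^ (β + β) / S ^ ((1:ℝ)+1) := by
        rw [hq]
        simp only
        rw [Real.rpow_add hpx, Real.rpow_add hSpos, Real.rpow_one, div_mul_div_comm]
      rw [h2, Real.div_rpow (Real.rpow_nonneg hpx.le _) (Real.rpow_nonneg hSpos.le _),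
        ← Real.rpow_mul hpx.le, ← Real.rpow_mul hSpos.le, div_eq_mul_inv,
        ← Real.rpow_neg hSpos.le, ← mul_assoc, ← Real.rpow_add hpx,
        show α + (β+β)*(1-α) = β by rw [hβ, ← add_div, div_mul_eq_mul_div, add_div' _ _ _ h2α.ne', div_left_inj' h2α.ne']; ring,
        show -(((1:ℝ)+1)*(1-α)) = 2*(α-1) by ring]
    calc renyi p β = ((2*α-1)/(α-1)) * Real.log S := hren
      _ = (1/(α-1)) * Real.log (∑ x, p x ^ α * (q x * q x) ^ (1-α)) := by
          have hsum2 : ∑ x, p x ^ α * (q x * q x) ^ (1-α) = S ^ (2*α-1) := by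
            rw [Finset.sum_congr rfl (fun x _ => hterm x), ← Finset.sum_mul, ← hS]
            nth_rewrite 1 [← Real.rpow_one S]
            rw [← Real.rpow_add hSpos]
            congr 1
            ring
          rw [hsum2, Real.log_rpow hSpos]
          ring
  · -- lower bound
    rintro v ⟨qX, qY, hqX, hqY, hqXp, hqYp, rfl⟩
    rw [hsum qX qY, hren]
    set A := ∑ x, p x ^ α * (qX x * qY x) ^ (1-α) with hA
    have hApos : 0 < A := by
      rw [hA]
      refine Finset.sum_pos (fun x _ => ?_) hne
      exact mul_pos (Real.rpow_pos_of_pos (hps x) α)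
        (Real.rpow_pos_of_pos (mul_pos (hqXp x) (hqYp x)) _)
    rcases hα1.lt_or_gt with hlt | hgt
    · -- 1/2 < α < 1 : show A ≤ S^(2α-1)
      have key : A ≤ S ^ (2*α - 1) := by
        have Hh := holder3 (f := fun x => p x ^ β) (g := qX) (h := qY)
          (fun x => (Real.rpow_pos_of_pos (hps x) β).le)
          (fun x => (hqXp x).le) (fun x => (hqYp x).le)
          (r := 2*α-1) (s := 1-α) (t := 1-α)
          h2α.le (by linarith) (by linarith) (by ring)
          (by rw [← hS]; exact hSpos) hqX.2 hqY.2
        calc A = ∑ x, (p x ^ β) ^ (2*α-1) * qX x ^ (1-α) * qY x ^ (1-α) := by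
              rw [hA]
              refine Finset.sum_congr rfl fun x _ => ?_
              rw [← Real.rpow_mul (hps x).le,
                show β*(2*α-1) = α by rw [hβ, div_mul_cancel₀ _ h2α.ne'],
                Real.mul_rpow (hqXp x).le (hqYp x).le, mul_assoc]
          _ ≤ (∑ x, p x ^ β) ^ (2*α-1) := Hh
          _ = S ^ (2*α-1) := by rw [← hS]
      have hlog : Real.log A ≤ (2*α-1) * Real.log S := by
        rw [← Real.log_rpow hSpos]
        exact Real.log_le_log hApos key
      have hneg : (1:ℝ)/(α-1) ≤ 0 := by
        apply le_of_lt
        apply div_neg_of_pos_of_neg one_pos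
        linarith
      calc ((2*α-1)/(α-1)) * Real.log S = (1/(α-1)) * ((2*α-1) * Real.log S) := by ring
        _ ≤ (1/(α-1)) * Real.log A := mul_le_mul_of_nonpos_left hlog hneg
    · -- α > 1 : show S ≤ A^(1/(2α-1))
      have key : S ≤ A ^ ((1:ℝ)/(2*α-1)) := by
        have Hh := holder3 (f := fun x => p x ^ α * (qX x * qY x) ^ (1-α))
          (g := qX) (h := qY)
          (fun x => mul_nonneg (Real.rpow_nonneg (hps x).le _)
            (Real.rpow_nonneg (mul_pos (hqXp x) (hqYp x)).le _))
          (fun x => (hqXp x).le) (fun x => (hqYp x).le)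
          (r := (1:ℝ)/(2*α-1)) (s := (α-1)/(2*α-1)) (t := (α-1)/(2*α-1))
          (div_nonneg zero_le_one h2α.le) (div_nonneg (by linarith) h2α.le)
          (div_nonneg (by linarith) h2α.le)
          (by field_simp; ring) (by rw [← hA]; exact hApos) hqX.2 hqY.2
        calc S = ∑ x, (p x ^ α * (qX x * qY x) ^ (1-α)) ^ ((1:ℝ)/(2*α-1))
                  * qX x ^ ((α-1)/(2*α-1)) * qY x ^ ((α-1)/(2*α-1)) := by
              rw [hS]
              refine Finset.sum_congr rfl fun x _ => ?_
              have hx1 : (0:ℝ) < qX x ^ ((α-1)/(2*α-1)) := Real.rpow_pos_of_pos (hqXp x) _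
              have hy1 : (0:ℝ) < qY x ^ ((α-1)/(2*α-1)) := Real.rpow_pos_of_pos (hqYp x) _
              rw [Real.mul_rpow (Real.rpow_nonneg (hps x).le _)
                    (Real.rpow_nonneg (mul_pos (hqXp x) (hqYp x)).le _),
                ← Real.rpow_mul (hps x).le,
                ← Real.rpow_mul (mul_pos (hqXp x) (hqYp x)).le,
                show α * ((1:ℝ)/(2*α-1)) = β by rw [hβ]; ring,
                show (1-α) * ((1:ℝ)/(2*α-1)) = -((α-1)/(2*α-1)) by ring,
                Real.rpow_neg (mul_pos (hqXp x) (hqYp x)).le,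
                Real.mul_rpow (hqXp x).le (hqYp x).le]
              rw [mul_assoc, mul_assoc, inv_mul_cancel₀ (mul_pos hx1 hy1).ne', mul_one]
          _ ≤ (∑ x, p x ^ α * (qX x * qY x) ^ (1-α)) ^ ((1:ℝ)/(2*α-1)) := Hh
          _ = A ^ ((1:ℝ)/(2*α-1)) := by rw [← hA]
      have hlog : (2*α-1) * Real.log S ≤ Real.log A := by
        have h1 : Real.log S ≤ (1/(2*α-1)) * Real.log A := by
          rw [← Real.log_rpow hApos]
          exact Real.log_le_log hSpos key
        calc (2*α-1) * Real.log S ≤ (2*α-1) * ((1/(2*α-1)) * Real.log A) :=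
              mul_le_mul_of_nonneg_left h1 h2α.le
          _ = Real.log A := by field_simp
      have hposc : (0:ℝ) ≤ 1/(α-1) := le_of_lt (one_div_pos.mpr (by linarith))
      calc ((2*α-1)/(α-1)) * Real.log S = (1/(α-1)) * ((2*α-1) * Real.log S) := by ring
        _ ≤ (1/(α-1)) * Real.log A := mul_le_mul_of_nonneg_left hlog hposc
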